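/- Let R_1, …, R_m be rings. Then: (1) the direct product R_1 × ⋯ × R_m is a strongly right C4*-ring if and only if each R_i is a strongly right C4*-ring; (2) the direct product R_1 × ⋯ × R_m is a strongly left C4*-ring if and only if each R_i is a strongly left C4*-ring. -/

import Mathlib

open MulOpposite

section C4Defs

/-- A submodule is a direct summand if it has a complement. -/
def IsDirectSummand {R M : Type*} [Ring R] [AddCommGroup M] [Module R M]
    (A : Submodule R M) : Prop :=
  ∃ B : Submodule R M, IsCompl A B

/-- `M` is a `C4`-module over `R`: for every internal direct sum decomposition `M = A ⊕ B`
and every homomorphism `f : A → B` whose kernel is a direct summand of `A`, the image of `f`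
is a direct summand of `B`. -/
def IsC4Module (R M : Type*) [Ring R] [AddCommGroup M] [Module R M] : Prop :=
  ∀ A B : Submodule R M, IsCompl A B → ∀ f : A →ₗ[R] B,
    IsDirectSummand (LinearMap.ker f) → IsDirectSummand (LinearMap.range f)

/-- `M` is a `C4*`-module: every submodule of `M` is a `C4`-module. -/
def IsC4StarModule (R M : Type*) [Ring R] [AddCommGroup M] [Module R M] : Prop :=
  ∀ N : Submodule R M, IsC4Module R N

/-- `M` is square-free: no nonzero submodules `A`, `B` with `A ⊓ B = ⊥` and `A ≅ B`. -/
def IsSquareFreeModule (R M : Type*) [Ring R] [AddCommGroup M] [Module R M] : Prop :=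
  ∀ A B : Submodule R M, A ≠ ⊥ → B ≠ ⊥ → A ⊓ B = ⊥ → IsEmpty (A ≃ₗ[R] B)

/-- `M` is summand-square-free: no nonzero direct summands `A`, `B` with `A ⊓ B = ⊥`
and `A ≅ B`. -/
def IsSummandSquareFree (R M : Type*) [Ring R] [AddCommGroup M] [Module R M] : Prop :=
  ∀ A B : Submodule R M, IsDirectSummand A → IsDirectSummand B →
    A ≠ ⊥ → B ≠ ⊥ → A ⊓ B = ⊥ → IsEmpty (A ≃ₗ[R] B)

/-- `X` is an essential submodule of `A`. -/
def IsEssentialIn {R M : Type*} [Ring R] [AddCommGroup M] [Module R M]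
    (X A : Submodule R M) : Prop :=
  X ≤ A ∧ ∀ N : Submodule R M, N ≤ A → N ≠ ⊥ → X ⊓ N ≠ ⊥

/-- A triple `(X, Y, f)` where `X`, `Y` are semisimple direct summands of `M` with
`X ⊓ Y = ⊥` and `f : X ≅ Y` an isomorphism.  These are the elements of the poset `S(M)`
from the definition of semi-weak-CS modules. -/
structure SWTriple (R M : Type*) [Ring R] [AddCommGroup M] [Module R M] where
  X : Submodule R M
  Y : Submodule R M
  semisimpleX : IsSemisimpleModule R X
  semisimpleY : IsSemisimpleModule R Y
  summandX : IsDirectSummand X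
  summandY : IsDirectSummand Y
  disj : X ⊓ Y = ⊥
  f : X ≃ₗ[R] Y

/-- The extension order on the poset `S(M)` of triples: `(X₁,Y₁,f₁) ≤ (X₂,Y₂,f₂)` iff
`X₁ ≤ X₂`, `Y₁ ≤ Y₂` and `f₂` restricts to `f₁` on `X₁`. -/
def SWTriple.Extends {R M : Type*} [Ring R] [AddCommGroup M] [Module R M]
    (t s : SWTriple R M) : Prop :=
  ∃ hX : t.X ≤ s.X, t.Y ≤ s.Y ∧
    ∀ x : t.X, (s.f ⟨x.1, hX x.2⟩ : M) = (t.f x : M)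

/-- `M` is semi-weak-CS: for every chain in the poset `S(M)`, with `X` the union of the first
components and `Y` the union of the second components, there are direct summands `A`, `B`
of `M` with `X` essential in `A` and `Y` essential in `B`. -/
def IsSemiWeakCS (R M : Type*) [Ring R] [AddCommGroup M] [Module R M] : Prop :=
  ∀ C : Set (SWTriple R M), IsChain SWTriple.Extends C →
    ∃ A B : Submodule R M, IsDirectSummand A ∧ IsDirectSummand B ∧
      IsEssentialIn (⨆ t ∈ C, t.X) A ∧ IsEssentialIn (⨆ t ∈ C, t.Y) B

/-- `M` is strongly `C4*` if it is both semi-weak-CS and `C4*`. -/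
def IsStronglyC4StarModule (R M : Type*) [Ring R] [AddCommGroup M] [Module R M] : Prop :=
  IsSemiWeakCS R M ∧ IsC4StarModule R M

/-- `R` is a right `C4*`-ring: the right regular module `R_R` (i.e. `R` as a module over
`Rᵐᵒᵖ`) is a `C4*`-module. -/
def IsRightC4StarRing (R : Type*) [Ring R] : Prop := IsC4StarModule Rᵐᵒᵖ R

/-- `R` is a left `C4*`-ring: the left regular module `_RR` is a `C4*`-module. -/
def IsLeftC4StarRing (R : Type*) [Ring R] : Prop := IsC4StarModule R R

/-- `R` is a strongly right `C4*`-ring. -/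
def IsStronglyRightC4StarRing (R : Type*) [Ring R] : Prop := IsStronglyC4StarModule Rᵐᵒᵖ R

/-- `R` is a strongly left `C4*`-ring. -/
def IsStronglyLeftC4StarRing (R : Type*) [Ring R] : Prop := IsStronglyC4StarModule R R

/-- `R` is right semi-weak-CS. -/
def IsRightSemiWeakCSRing (R : Type*) [Ring R] : Prop := IsSemiWeakCS Rᵐᵒᵖ R

/-- `R` is left semi-weak-CS. -/
def IsLeftSemiWeakCSRing (R : Type*) [Ring R] : Prop := IsSemiWeakCS R R

/-- The left square-free transfer condition `LSF`: if the right regular module `T_T` is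
summand-square-free then the left regular module `_TT` is square-free. -/
def LSF (T : Type*) [Ring T] : Prop :=
  IsSummandSquareFree Tᵐᵒᵖ T → IsSquareFreeModule T T

end C4Defs

section Corner

variable {T : Type*} [Ring T]

/-- The corner `eTe = {x : T | e * x = x ∧ x * e = x}` as a non-unital subring. -/
def cornerSubring (e : T) : NonUnitalSubring T where
  carrier := {x : T | e * x = x ∧ x * e = x}
  add_mem' := by
    rintro a b ⟨ha1, ha2⟩ ⟨hb1, hb2⟩
    exact ⟨by rw [mul_add, ha1, hb1], by rw [add_mul, ha2, hb2]⟩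
  zero_mem' := ⟨mul_zero e, zero_mul e⟩
  neg_mem' := by
    rintro a ⟨ha1, ha2⟩
    exact ⟨by rw [mul_neg, ha1], by rw [neg_mul, ha2]⟩
  mul_mem' := by
    rintro a b ⟨ha1, ha2⟩ ⟨hb1, hb2⟩
    exact ⟨by rw [← mul_assoc, ha1], by rw [mul_assoc, hb2]⟩

theorem mem_cornerSubring {e x : T} :
    x ∈ cornerSubring e ↔ e * x = x ∧ x * e = x := Iff.rfl

/-- The corner ring `eTe` associated to an idempotent `e` of `T`; its identity is `e`. -/
def Corner (e : T) (he : IsIdempotentElem e) : Type _ := ↥(cornerSubring e)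

instance {e : T} {he : IsIdempotentElem e} : Ring (Corner e he) :=
  { (inferInstance : NonUnitalRing ↥(cornerSubring e)) with
    one := ⟨e, he, he⟩
    one_mul := fun x => Subtype.ext (mem_cornerSubring.mp x.2).1
    mul_one := fun x => Subtype.ext (mem_cornerSubring.mp x.2).2 }

/-- `eT = {x : T | e * x = x}` as an additive subgroup; it is a left module over the
corner ring `eTe`. -/
def leftPart (e : T) : AddSubgroup T where
  carrier := {x : T | e * x = x}
  add_mem' := by
    intro a b ha hb
    simp only [Set.mem_setOf_eq] at *
    rw [mul_add, ha, hb]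
  zero_mem' := mul_zero e
  neg_mem' := by
    intro a ha
    simp only [Set.mem_setOf_eq] at *
    rw [mul_neg, ha]

/-- `Te = {x : T | x * e = x}` as an additive subgroup; it is a right module over the
corner ring `eTe`. -/
def rightPart (e : T) : AddSubgroup T where
  carrier := {x : T | x * e = x}
  add_mem' := by
    intro a b ha hb
    simp only [Set.mem_setOf_eq] at *
    rw [add_mul, ha, hb]
  zero_mem' := zero_mul e
  neg_mem' := by
    intro a ha
    simp only [Set.mem_setOf_eq] at *
    rw [neg_mul, ha]

theorem mem_leftPart {e x : T} : x ∈ leftPart e ↔ e * x = x := Iff.rfl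

theorem mem_rightPart {e x : T} : x ∈ rightPart e ↔ x * e = x := Iff.rfl

/-- `eT` is a (unital) left module over the corner ring `eTe`. -/
instance {e : T} {he : IsIdempotentElem e} : Module (Corner e he) ↥(leftPart e) where
  smul c x := ⟨c.1 * x.1, by
    have h1 : e * c.1 = c.1 := (mem_cornerSubring.mp c.2).1
    show e * (c.1 * x.1) = c.1 * x.1
    rw [← mul_assoc, h1]⟩
  one_smul x := Subtype.ext (by
    show e * x.1 = x.1
    exact mem_leftPart.mp x.2)
  mul_smul a b x := Subtype.ext (by
    show (a.1 * b.1) * x.1 = a.1 * (b.1 * x.1)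
    rw [mul_assoc])
  smul_zero a := Subtype.ext (by
    show a.1 * 0 = 0
    exact mul_zero _)
  smul_add a x y := Subtype.ext (by
    show a.1 * (x.1 + y.1) = a.1 * x.1 + a.1 * y.1
    exact mul_add _ _ _)
  add_smul a b x := Subtype.ext (by
    show (a.1 + b.1) * x.1 = a.1 * x.1 + b.1 * x.1
    exact add_mul _ _ _)
  zero_smul x := Subtype.ext (by
    show (0 : T) * x.1 = 0
    exact zero_mul _)

/-- `Te` is a (unital) right module over the corner ring `eTe`, i.e. a module over
`(eTe)ᵐᵒᵖ`. -/
instance {e : T} {he : IsIdempotentElem e} : Module (Corner e he)ᵐᵒᵖ ↥(rightPart e) where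
  smul c x := ⟨x.1 * (unop c).1, by
    have h2 : (unop c).1 * e = (unop c).1 := (mem_cornerSubring.mp (unop c).2).2
    show (x.1 * (unop c).1) * e = x.1 * (unop c).1
    rw [mul_assoc, h2]⟩
  one_smul x := Subtype.ext (by
    show x.1 * e = x.1
    exact mem_rightPart.mp x.2)
  mul_smul a b x := Subtype.ext (by
    show x.1 * ((unop b).1 * (unop a).1) = (x.1 * (unop b).1) * (unop a).1
    rw [mul_assoc])
  smul_zero a := Subtype.ext (by
    show (0 : T) * (unop a).1 = 0
    exact zero_mul _)
  smul_add a x y := Subtype.ext (by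
    show (x.1 + y.1) * (unop a).1 = x.1 * (unop a).1 + y.1 * (unop a).1
    exact add_mul _ _ _)
  add_smul a b x := Subtype.ext (by
    show x.1 * ((unop a).1 + (unop b).1) = x.1 * (unop a).1 + x.1 * (unop b).1
    exact mul_add _ _ _)
  zero_smul x := Subtype.ext (by
    show x.1 * (0 : T) = 0
    exact mul_zero _)

/-- The hereditary side-transfer condition `HST`: for every idempotent `e` of `T`, if the
module `eT`/`Te` is summand-square-free as a right `eTe`-module (formalized on the carrier
`Te = rightPart e`, which carries the unital right `eTe`-action; at `e = 1` this is the right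
regular module `T_T`), then the left `eTe`-module (carrier `eT = leftPart e`, carrying the
unital left `eTe`-action; at `e = 1` this is the left regular module `_TT`) is square-free. -/
def HST (T : Type*) [Ring T] : Prop :=
  ∀ (e : T) (he : IsIdempotentElem e),
    IsSummandSquareFree (Corner e he)ᵐᵒᵖ ↥(rightPart e) →
      IsSquareFreeModule (Corner e he) ↥(leftPart e)

/-- The corner-stability axiom `CSA`: for every idempotent `e` of `T`, the left regular
module of the corner ring `eTe` is semi-weak-CS. -/
def CSA' (T : Type*) [Ring T] : Prop :=
  ∀ (e : T) (he : IsIdempotentElem e),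
    IsSemiWeakCS (Corner e he) (Corner e he)

end Corner

section SymmetryDatum

/-- A right-to-left symmetry datum on `R`: a ring decomposition `R ≅ S × T` where `S` is
semisimple artinian, the right regular module `T_T` is summand-square-free, the two ideals
`S`, `T` are orthogonal as right `R`-modules (no nonzero isomorphic right `R`-submodules),
and `T` satisfies `HST` and `CSA`. -/
structure RightToLeftSymmetryDatum (R S T : Type*) [Ring R] [Ring S] [Ring T] where
  iso : R ≃+* S × T
  semisimpleArtinian : IsSemisimpleRing S
  ssf : IsSummandSquareFree Tᵐᵒᵖ T
  orthogonal : ∀ A B : Submodule Rᵐᵒᵖ R,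
    (∀ a ∈ A, (iso a).2 = 0) → (∀ b ∈ B, (iso b).1 = 0) →
    A ≠ ⊥ → B ≠ ⊥ → IsEmpty (A ≃ₗ[Rᵐᵒᵖ] B)
  hst : HST T
  csa : CSA' T

end SymmetryDatum

section Beta

variable (R : Type*) [Ring R]

/-- The right annihilator `r_R(P) = {s : R | P s = 0}` of a right submodule `P` of `R`. -/
def rightAnnSet (P : Submodule Rᵐᵒᵖ R) : Set R := {s : R | ∀ p ∈ P, p * s = 0}

/-- The annihilator-bidual `β_r(P) = ℓ_R(r_R(P))`, as a right ideal of `R`. -/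
def betaR (P : Submodule Rᵐᵒᵖ R) : Submodule Rᵐᵒᵖ R where
  carrier := {r : R | ∀ s ∈ rightAnnSet R P, r * s = 0}
  add_mem' := by
    intro a b ha hb
    intro s hs
    rw [add_mul, ha s hs, hb s hs, add_zero]
  zero_mem' := by
    intro s hs
    exact zero_mul s
  smul_mem' := by
    intro c x hx s hs
    show (x * unop c) * s = 0
    rw [mul_assoc]
    refine hx _ ?_
    intro p hp
    rw [← mul_assoc]
    exact hs (p * unop c) (Submodule.smul_mem P c hp)

/-- A right ideal is a two-sided ideal which is a ring direct summand of `R` iff it is of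
the form `cR` for a central idempotent `c`. -/
def IsRingDirectSummandIdeal {R : Type*} [Ring R] (I : Submodule Rᵐᵒᵖ R) : Prop :=
  ∃ c : R, IsIdempotentElem c ∧ (∀ r : R, c * r = r * c) ∧ (∀ x : R, x ∈ I ↔ c * x = x)

/-- `R` has right semisimple annihilator asymmetry. -/
def HasRightSemisimpleAnnihilatorAsymmetry (R : Type*) [Ring R] : Prop :=
  ∃ P : Submodule Rᵐᵒᵖ R, IsSemisimpleModule Rᵐᵒᵖ P ∧ IsDirectSummand P ∧
    (¬ IsSemisimpleModule Rᵐᵒᵖ (betaR R P) ∨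
     (IsSemisimpleModule Rᵐᵒᵖ (betaR R P) ∧ ¬ IsRingDirectSummandIdeal (betaR R P)) ∨
     ¬ IsEssentialIn P (betaR R P))

end Beta
set_option maxHeartbeats 1600000
set_option synthInstance.maxHeartbeats 1000000

section CompatSection

/-- A two-way compatible additive equivalence between a module over `R` and a module
over `S`. -/
structure CompatEquiv (R S M N : Type*) [Ring R] [Ring S] [AddCommGroup M]
    [AddCommGroup N] [Module R M] [Module S N] where
  σ : R → S
  τ : S → R
  e : M ≃+ N
  hσ : ∀ (r : R) (m : M), e (r • m) = σ r • e m
  hτ : ∀ (s : S) (n : N), e.symm (s • n) = τ s • e.symm n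

namespace CompatEquiv

variable {R S M N : Type*} [Ring R] [Ring S] [AddCommGroup M] [AddCommGroup N]
  [Module R M] [Module S N] (c : CompatEquiv R S M N)

set_option linter.unusedSectionVars false

include c

theorem hτ' (s : S) (m : M) : c.e (c.τ s • m) = s • c.e m := by
  have := c.hτ s (c.e m)
  simp only [AddEquiv.symm_apply_apply] at this
  rw [← this, AddEquiv.apply_symm_apply]

theorem hσ' (r : R) (n : N) : c.e.symm (c.σ r • n) = r • c.e.symm n := by
  have := c.hσ r (c.e.symm n)
  simp only [AddEquiv.apply_symm_apply] at this
  rw [← this, AddEquiv.symm_apply_apply]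

def symm : CompatEquiv S R N M where
  σ := c.τ
  τ := c.σ
  e := c.e.symm
  hσ := c.hτ
  hτ := by
    intro r m
    simpa using c.hσ r m

def smap (A : Submodule R M) : Submodule S N where
  carrier := c.e '' A
  add_mem' := by
    rintro _ _ ⟨a, ha, rfl⟩ ⟨b, hb, rfl⟩
    exact ⟨a + b, A.add_mem ha hb, map_add _ _ _⟩
  zero_mem' := ⟨0, A.zero_mem, map_zero _⟩
  smul_mem' := by
    rintro s _ ⟨a, ha, rfl⟩
    exact ⟨c.τ s • a, A.smul_mem _ ha, c.hτ' s a⟩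

theorem mem_smap {A : Submodule R M} {n : N} : n ∈ c.smap A ↔ c.e.symm n ∈ A := by
  constructor
  · rintro ⟨a, ha, rfl⟩; simpa using ha
  · intro h; exact ⟨c.e.symm n, h, by simp⟩

theorem mem_smap' {A : Submodule R M} {m : M} : c.e m ∈ c.smap A ↔ m ∈ A := by
  rw [mem_smap]; simp

theorem smap_symm_smap (A : Submodule R M) : c.symm.smap (c.smap A) = A := by
  ext m
  rw [show (m ∈ c.symm.smap (c.smap A)) ↔ c.symm.e.symm m ∈ c.smap A from c.symm.mem_smap]
  show c.e.symm.symm m ∈ c.smap A ↔ _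
  simp only [AddEquiv.symm_symm]
  exact c.mem_smap'

theorem symm_smap_smap (A : Submodule S N) : c.smap (c.symm.smap A) = A := by
  have := c.symm.smap_symm_smap A
  exact this

theorem smap_mono {A B : Submodule R M} (h : A ≤ B) : c.smap A ≤ c.smap B := by
  rintro _ ⟨a, ha, rfl⟩; exact ⟨a, h ha, rfl⟩

theorem smap_le_iff {A B : Submodule R M} : c.smap A ≤ c.smap B ↔ A ≤ B := by
  constructor
  · intro h a ha
    have : c.e a ∈ c.smap B := h ⟨a, ha, rfl⟩
    rwa [c.mem_smap'] at this
  · exact c.smap_mono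

def sOrderIso : Submodule R M ≃o Submodule S N where
  toFun := c.smap
  invFun := c.symm.smap
  left_inv := c.smap_symm_smap
  right_inv := c.symm_smap_smap
  map_rel_iff' := c.smap_le_iff

theorem smap_bot : c.smap ⊥ = ⊥ := by
  ext n; rw [c.mem_smap]; simp [AddEquiv.symm_apply_eq]

theorem smap_inf (A B : Submodule R M) : c.smap (A ⊓ B) = c.smap A ⊓ c.smap B := by
  ext n; simp only [Submodule.mem_inf, c.mem_smap]

theorem smap_iSup {ι : Sort*} (f : ι → Submodule R M) :
    c.smap (⨆ i, f i) = ⨆ i, c.smap (f i) := c.sOrderIso.map_iSup f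

theorem smap_ne_bot {A : Submodule R M} (h : A ≠ ⊥) : c.smap A ≠ ⊥ := by
  intro hb
  apply h
  have := congrArg c.symm.smap hb
  rwa [c.smap_symm_smap, c.symm.smap_bot] at this

theorem smap_isCompl {A B : Submodule R M} (h : IsCompl A B) :
    IsCompl (c.smap A) (c.smap B) := c.sOrderIso.isCompl h

theorem summand_iff {A : Submodule R M} :
    IsDirectSummand A ↔ IsDirectSummand (c.smap A) := by
  constructor
  · rintro ⟨B, hB⟩; exact ⟨c.smap B, c.smap_isCompl hB⟩
  · rintro ⟨B, hB⟩
    refine ⟨c.symm.smap B, ?_⟩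
    have := c.symm.smap_isCompl hB
    rwa [c.smap_symm_smap] at this

theorem essential_of {X A : Submodule R M} (h : IsEssentialIn X A) :
    IsEssentialIn (c.smap X) (c.smap A) := by
  refine ⟨c.smap_mono h.1, ?_⟩
  intro P hP hPb
  have h1 : c.symm.smap P ≤ A := by
    have := c.symm.smap_mono hP
    rwa [c.smap_symm_smap] at this
  have h2 : c.symm.smap P ≠ ⊥ := c.symm.smap_ne_bot hPb
  have h3 := h.2 _ h1 h2
  have := c.smap_ne_bot h3
  rwa [c.smap_inf, c.symm_smap_smap] at this

theorem essential_iff {X A : Submodule R M} :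
    IsEssentialIn X A ↔ IsEssentialIn (c.smap X) (c.smap A) := by
  refine ⟨c.essential_of, fun h => ?_⟩
  have := c.symm.essential_of h
  rwa [c.smap_symm_smap, c.smap_symm_smap] at this

/-- The restriction of `c` to a submodule `A` and its image. -/
def restrict (A : Submodule R M) : CompatEquiv R S ↥A ↥(c.smap A) where
  σ := c.σ
  τ := c.τ
  e := { toFun := fun x => ⟨c.e x.1, ⟨x.1, x.2, rfl⟩⟩
         invFun := fun y => ⟨c.e.symm y.1, c.mem_smap.mp y.2⟩
         left_inv := fun x => by ext; simp
         right_inv := fun y => by ext; simp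
         map_add' := fun x y => by ext; simp }
  hσ := fun r m => by ext; exact c.hσ r m.1
  hτ := fun s n => by ext; exact c.hτ s n.1

@[simp] theorem restrict_e_apply (A : Submodule R M) (x : ↥A) :
    ((c.restrict A).e x : N) = c.e x.1 := rfl

@[simp] theorem restrict_e_symm_apply (A : Submodule R M) (y : ↥(c.smap A)) :
    ((c.restrict A).e.symm y : M) = c.e.symm y.1 := rfl

/-- Conjugate a linear map between subtypes. -/
def conj {A B : Submodule R M} (f : ↥A →ₗ[R] ↥B) :
    ↥(c.smap A) →ₗ[S] ↥(c.smap B) where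
  toFun := fun y => (c.restrict B).e (f ((c.restrict A).e.symm y))
  map_add' := fun x y => by
    show (c.restrict B).e (f ((c.restrict A).e.symm (x + y))) =
      (c.restrict B).e (f ((c.restrict A).e.symm x)) +
      (c.restrict B).e (f ((c.restrict A).e.symm y))
    rw [map_add, map_add, map_add]
  map_smul' := fun s y => by
    show (c.restrict B).e (f ((c.restrict A).e.symm (s • y))) =
      s • (c.restrict B).e (f ((c.restrict A).e.symm y))
    rw [(c.restrict A).hτ s y, map_smul]
    exact (c.restrict B).hτ' s _

theorem conj_ker {A B : Submodule R M} (f : ↥A →ₗ[R] ↥B) :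
    LinearMap.ker (c.conj f) = (c.restrict A).smap (LinearMap.ker f) := by
  ext y
  rw [(c.restrict A).mem_smap]
  simp only [LinearMap.mem_ker, conj]
  constructor
  · intro h
    have := congrArg (c.restrict B).e.symm h
    simpa using this
  · intro h
    show (c.restrict B).e _ = 0
    rw [LinearMap.coe_mk, AddHom.coe_mk] at h ⊢
    rw [h, map_zero]

theorem conj_range {A B : Submodule R M} (f : ↥A →ₗ[R] ↥B) :
    LinearMap.range (c.conj f) = (c.restrict B).smap (LinearMap.range f) := by
  ext y
  rw [(c.restrict B).mem_smap]
  simp only [LinearMap.mem_range, conj]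
  constructor
  · rintro ⟨x, rfl⟩
    exact ⟨(c.restrict A).e.symm x, by simp⟩
  · rintro ⟨x, hx⟩
    refine ⟨(c.restrict A).e x, ?_⟩
    rw [LinearMap.coe_mk, AddHom.coe_mk]
    rw [AddEquiv.symm_apply_apply, hx, AddEquiv.apply_symm_apply]

theorem c4_of (h : IsC4Module R M) : IsC4Module S N := by
  intro A' B' hcompl f' hker
  set A := c.symm.smap A'
  set B := c.symm.smap B'
  have hcompl2 : IsCompl A B := c.symm.smap_isCompl hcompl
  set f := c.symm.conj f'
  have hker2 : IsDirectSummand (LinearMap.ker f) := by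
    rw [c.symm.conj_ker]
    exact ((c.symm.restrict A').summand_iff).mp hker
  have hr := h A B hcompl2 f hker2
  rw [c.symm.conj_range] at hr
  exact ((c.symm.restrict B').summand_iff).mpr hr

theorem semisimple_of (h : IsSemisimpleModule R M) : IsSemisimpleModule S N := by
  rw [isSemisimpleModule_iff]
  constructor
  intro A'
  obtain ⟨K, hK⟩ := h.toComplementedLattice.exists_isCompl (c.symm.smap A')
  refine ⟨c.smap K, ?_⟩
  have := c.smap_isCompl hK
  rwa [c.symm_smap_smap] at this

/-- Conjugate a linear equivalence between subtypes. -/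
def conjEquiv {A B : Submodule R M} (f : ↥A ≃ₗ[R] ↥B) :
    ↥(c.smap A) ≃ₗ[S] ↥(c.smap B) :=
  { c.conj (f : ↥A →ₗ[R] ↥B) with
    invFun := fun y => (c.restrict A).e (f.symm ((c.restrict B).e.symm y))
    left_inv := fun x => by
      show (c.restrict A).e (f.symm ((c.restrict B).e.symm
        ((c.restrict B).e (f ((c.restrict A).e.symm x))))) = x
      simp
    right_inv := fun y => by
      show (c.restrict B).e (f ((c.restrict A).e.symm
        ((c.restrict A).e (f.symm ((c.restrict B).e.symm y))))) = y
      simp }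

@[simp] theorem conjEquiv_apply_coe {A B : Submodule R M} (f : ↥A ≃ₗ[R] ↥B)
    (x : ↥(c.smap A)) :
    (c.conjEquiv f x : N) = c.e (f ((c.restrict A).e.symm x)).1 := rfl

theorem c4star_of (h : IsC4StarModule R M) : IsC4StarModule S N := by
  intro N'
  exact ((c.symm.restrict N').symm).c4_of (h (c.symm.smap N'))

/-- Map of SW-triples. -/
def triple (t : SWTriple R M) : SWTriple S N where
  X := c.smap t.X
  Y := c.smap t.Y
  semisimpleX := (c.restrict t.X).semisimple_of t.semisimpleX
  semisimpleY := (c.restrict t.Y).semisimple_of t.semisimpleY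
  summandX := (c.summand_iff).mp t.summandX
  summandY := (c.summand_iff).mp t.summandY
  disj := by rw [← c.smap_inf, t.disj, c.smap_bot]
  f := c.conjEquiv t.f

theorem triple_extends {t s : SWTriple R M} (h : t.Extends s) :
    (c.triple t).Extends (c.triple s) := by
  obtain ⟨hX, hY, hf⟩ := h
  refine ⟨c.smap_mono hX, c.smap_mono hY, ?_⟩
  intro x
  have hmem : c.e.symm x.1 ∈ t.X := c.mem_smap.mp x.2
  show (c.conjEquiv s.f ⟨x.1, c.smap_mono hX x.2⟩ : N) = (c.conjEquiv t.f x : N)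
  change c.e (s.f ((c.restrict s.X).e.symm ⟨x.1, c.smap_mono hX x.2⟩)).1
    = c.e (t.f ((c.restrict t.X).e.symm x)).1
  refine congrArg c.e ?_
  have e1 : (c.restrict s.X).e.symm ⟨x.1, c.smap_mono hX x.2⟩
      = (⟨c.e.symm x.1, hX hmem⟩ : ↥s.X) := Subtype.ext rfl
  have e2 : (c.restrict t.X).e.symm x = (⟨c.e.symm x.1, hmem⟩ : ↥t.X) := Subtype.ext rfl
  rw [e1, e2]
  exact hf ⟨c.e.symm x.1, hmem⟩

theorem semiWeakCS_of (h : IsSemiWeakCS R M) : IsSemiWeakCS S N := by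
  intro C' hC'
  set C : Set (SWTriple R M) := c.symm.triple '' C' with hC
  have hchain : IsChain SWTriple.Extends C := by
    rintro _ ⟨t1, ht1, rfl⟩ _ ⟨t2, ht2, rfl⟩ hne
    have hne' : t1 ≠ t2 := by rintro rfl; exact hne rfl
    rcases hC' ht1 ht2 hne' with h1 | h1
    · exact Or.inl (c.symm.triple_extends h1)
    · exact Or.inr (c.symm.triple_extends h1)
  obtain ⟨A, B, hA, hB, hXA, hYB⟩ := h C hchain
  have hXeq : (⨆ t ∈ C, t.X) = c.symm.smap (⨆ t' ∈ C', t'.X) := by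
    rw [hC, iSup_image]
    simp only [CompatEquiv.triple]
    rw [c.symm.smap_iSup]
    congr 1
    funext t'
    exact (c.symm.smap_iSup _).symm
  have hYeq : (⨆ t ∈ C, t.Y) = c.symm.smap (⨆ t' ∈ C', t'.Y) := by
    rw [hC, iSup_image]
    simp only [CompatEquiv.triple]
    rw [c.symm.smap_iSup]
    congr 1
    funext t'
    exact (c.symm.smap_iSup _).symm
  refine ⟨c.smap A, c.smap B, (c.summand_iff).mp hA, (c.summand_iff).mp hB, ?_, ?_⟩
  · rw [hXeq] at hXA
    have := c.essential_of hXA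
    rwa [c.symm_smap_smap] at this
  · rw [hYeq] at hYB
    have := c.essential_of hYB
    rwa [c.symm_smap_smap] at this

theorem strongly_of (h : IsStronglyC4StarModule R M) : IsStronglyC4StarModule S N :=
  ⟨c.semiWeakCS_of h.1, c.c4star_of h.2⟩

theorem strongly_iff : IsStronglyC4StarModule R M ↔ IsStronglyC4StarModule S N :=
  ⟨c.strongly_of, c.symm.strongly_of⟩

end CompatEquiv

end CompatSection
section PiSection

variable {ι : Type*} [Fintype ι] [DecidableEq ι]

section PiDefs

variable (Rs : ι → Type*) [∀ i, Ring (Rs i)]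

/-- The canonical idempotent of the product ring supported at `i`. -/
def piIdem (i : ι) : ∀ j, Rs j := Pi.single i 1

theorem piIdem_mul (i : ι) (r : ∀ j, Rs j) : piIdem Rs i * r = Pi.single i (r i) := by
  funext j
  by_cases h : j = i
  · subst h; simp [piIdem]
  · simp [piIdem, Pi.single_apply, h]

theorem mul_piIdem (i : ι) (r : ∀ j, Rs j) : r * piIdem Rs i = Pi.single i (r i) := by
  funext j
  by_cases h : j = i
  · subst h; simp [piIdem]
  · simp [piIdem, Pi.single_apply, h]

theorem piIdem_mul_piIdem (i : ι) : piIdem Rs i * piIdem Rs i = piIdem Rs i := by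
  rw [piIdem_mul]
  simp [piIdem]

theorem piIdem_mul_piIdem_ne {i j : ι} (h : j ≠ i) :
    piIdem Rs j * piIdem Rs i = 0 := by
  rw [piIdem_mul]
  rw [show (piIdem Rs i) j = 0 from Pi.single_eq_of_ne h 1]
  exact Pi.single_zero j

theorem piIdem_sum : ∑ i, piIdem Rs i = (1 : ∀ j, Rs j) :=
  Finset.univ_sum_single (1 : ∀ j, Rs j)

theorem single_mul_single (i : ι) (a b : Rs i) :
    (Pi.single i a : ∀ j, Rs j) * Pi.single i b = Pi.single i (a * b) := by
  funext j
  by_cases h : j = i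
  · subst h; simp
  · simp [Pi.single_apply, h]

variable {Rs}
variable {V : Type*} [AddCommGroup V] [Module (∀ j, Rs j) V]

theorem piIdem_smul_smul (i : ι) (v : V) :
    piIdem Rs i • piIdem Rs i • v = piIdem Rs i • v := by
  rw [← mul_smul, piIdem_mul_piIdem]

theorem piIdem_smul_smul_ne {i j : ι} (h : j ≠ i) (v : V) :
    piIdem Rs j • piIdem Rs i • v = 0 := by
  rw [← mul_smul, piIdem_mul_piIdem_ne Rs h, zero_smul]

theorem smul_piIdem_comm (i : ι) (r : ∀ j, Rs j) (v : V) :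
    r • piIdem Rs i • v = piIdem Rs i • r • v := by
  rw [← mul_smul, ← mul_smul, mul_piIdem, ← piIdem_mul]

theorem smul_of_piIdem_fix {i : ι} {v : V} (h : piIdem Rs i • v = v) (r : ∀ j, Rs j) :
    r • v = (Pi.single i (r i) : ∀ j, Rs j) • v := by
  conv_lhs => rw [← h]
  rw [← mul_smul, mul_piIdem]

variable (Rs) in
theorem sum_piIdem_smul (v : V) : ∑ i, piIdem Rs i • v = v := by
  rw [← Finset.sum_smul, piIdem_sum, one_smul]

variable (Rs) in
/-- The `i`-th component of an `R`-module `V`, as a submodule of `V`. -/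
def piComp (i : ι) (V : Type*) [AddCommGroup V] [Module (∀ j, Rs j) V] :
    Submodule (∀ j, Rs j) V where
  carrier := {v | piIdem Rs i • v = v}
  add_mem' := by
    intro a b ha hb
    simp only [Set.mem_setOf_eq] at *
    rw [smul_add, ha, hb]
  zero_mem' := smul_zero _
  smul_mem' := by
    intro r v hv
    simp only [Set.mem_setOf_eq] at *
    rw [← smul_piIdem_comm, hv]

theorem mem_piComp {i : ι} {v : V} : v ∈ piComp Rs i V ↔ piIdem Rs i • v = v := Iff.rfl

/-- The scalar action of `Rs i` on the `i`-th component. -/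
instance piCompSMul (i : ι) : SMul (Rs i) ↥(piComp Rs i V) where
  smul a x := ⟨(Pi.single i a : ∀ j, Rs j) • x.1, by
    rw [mem_piComp, ← mul_smul, piIdem_mul, Pi.single_eq_same]⟩

@[simp] theorem piComp_smul_coe (i : ι) (a : Rs i) (x : ↥(piComp Rs i V)) :
    ((a • x : ↥(piComp Rs i V)) : V) = (Pi.single i a : ∀ j, Rs j) • (x : V) := rfl

/-- The `Rs i`-module structure on the `i`-th component. -/
instance piCompModule (i : ι) : Module (Rs i) ↥(piComp Rs i V) where
  one_smul x := Subtype.ext (by rw [piComp_smul_coe]; exact x.2)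
  mul_smul a b x := Subtype.ext (by
    simp only [piComp_smul_coe]
    rw [← mul_smul, single_mul_single])
  smul_zero a := Subtype.ext (by
    rw [piComp_smul_coe]
    show (Pi.single i a : ∀ j, Rs j) • (0 : V) = ((0 : ↥(piComp Rs i V)) : V)
    rw [smul_zero]; rfl)
  smul_add a x y := Subtype.ext (by
    simp only [piComp_smul_coe, Submodule.coe_add]
    exact smul_add _ _ _)
  add_smul a b x := Subtype.ext (by
    simp only [piComp_smul_coe, Submodule.coe_add]
    rw [Pi.single_add, add_smul])
  zero_smul x := Subtype.ext (by
    rw [piComp_smul_coe, Pi.single_zero, zero_smul]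
    rfl)

variable (Rs) in
/-- Projection onto the `i`-th component. -/
def piProj (i : ι) : V →+ ↥(piComp Rs i V) where
  toFun := fun v => ⟨piIdem Rs i • v, piIdem_smul_smul i v⟩
  map_zero' := Subtype.ext (smul_zero _)
  map_add' := fun v w => Subtype.ext (smul_add _ _ _)

@[simp] theorem piProj_coe (i : ι) (v : V) :
    ((piProj Rs i v : ↥(piComp Rs i V)) : V) = piIdem Rs i • v := rfl

theorem piProj_smul (i : ι) (r : ∀ j, Rs j) (v : V) :
    piProj Rs i (r • v) = r i • piProj Rs i v := by
  refine Subtype.ext ?_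
  rw [piProj_coe, piComp_smul_coe, piProj_coe]
  rw [← mul_smul, ← mul_smul, piIdem_mul, mul_piIdem, Pi.single_eq_same]

theorem piProj_of_mem {i : ι} (x : ↥(piComp Rs i V)) : piProj Rs i (x : V) = x :=
  Subtype.ext x.2

theorem piProj_of_mem_ne {i j : ι} (h : j ≠ i) (x : ↥(piComp Rs i V)) :
    piProj Rs j (x : V) = 0 := by
  refine Subtype.ext ?_
  rw [piProj_coe]
  conv_lhs => rw [← x.2]
  rw [piIdem_smul_smul_ne h]
  rfl

variable (Rs) in
theorem sum_piProj (v : V) : ∑ i, ((piProj Rs i v : ↥(piComp Rs i V)) : V) = v := by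
  simp only [piProj_coe]
  exact sum_piIdem_smul Rs v

variable (Rs) in
/-- The `i`-th component of a submodule. -/
def scomp (i : ι) (N : Submodule (∀ j, Rs j) V) :
    Submodule (Rs i) ↥(piComp Rs i V) where
  carrier := {x | (x : V) ∈ N}
  add_mem' := fun ha hb => N.add_mem ha hb
  zero_mem' := N.zero_mem
  smul_mem' := fun a x hx => by
    show ((a • x : ↥(piComp Rs i V)) : V) ∈ N
    rw [piComp_smul_coe]
    exact N.smul_mem _ hx

theorem mem_scomp {i : ι} {N : Submodule (∀ j, Rs j) V} {x : ↥(piComp Rs i V)} :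
    x ∈ scomp Rs i N ↔ (x : V) ∈ N := Iff.rfl

theorem piProj_mem_scomp {i : ι} {N : Submodule (∀ j, Rs j) V} {v : V} (hv : v ∈ N) :
    piProj Rs i v ∈ scomp Rs i N := N.smul_mem _ hv

theorem mem_iff_proj {N : Submodule (∀ j, Rs j) V} {v : V} :
    v ∈ N ↔ ∀ i, piProj Rs i v ∈ scomp Rs i N := by
  constructor
  · intro hv i; exact piProj_mem_scomp hv
  · intro h
    rw [← sum_piProj Rs v]
    exact N.sum_mem fun i _ => h i

theorem scomp_bot {i : ι} : scomp Rs i (⊥ : Submodule (∀ j, Rs j) V) = ⊥ := by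
  ext x
  rw [mem_scomp, Submodule.mem_bot, Submodule.mem_bot]
  exact ⟨fun h => Subtype.ext h, fun h => by rw [h]; rfl⟩

theorem scomp_inf {i : ι} (N K : Submodule (∀ j, Rs j) V) :
    scomp Rs i (N ⊓ K) = scomp Rs i N ⊓ scomp Rs i K := rfl

theorem scomp_mono {i : ι} {N K : Submodule (∀ j, Rs j) V} (h : N ≤ K) :
    scomp Rs i N ≤ scomp Rs i K := fun _ hx => h hx

theorem scomp_ne_bot_of {i : ι} {N : Submodule (∀ j, Rs j) V}
    (h : scomp Rs i N ≠ ⊥) : N ≠ ⊥ := by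
  intro hb
  subst hb
  exact h scomp_bot

theorem exists_scomp_ne_bot {N : Submodule (∀ j, Rs j) V} (h : N ≠ ⊥) :
    ∃ i, scomp Rs i N ≠ ⊥ := by
  by_contra hc
  push_neg at hc
  apply h
  ext v
  simp only [Submodule.mem_bot]
  constructor
  · intro hv
    have : ∀ i, piProj Rs i v = 0 := by
      intro i
      have := piProj_mem_scomp (i := i) hv
      rw [hc i] at this
      simpa using this
    rw [← sum_piProj Rs v]
    refine Finset.sum_eq_zero fun i _ => ?_
    rw [this i]
    rfl
  · rintro rfl; exact N.zero_mem

variable (Rs) in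
/-- The embedding of a submodule of the `i`-th component into `V`. -/
def pemb (i : ι) (S : Submodule (Rs i) ↥(piComp Rs i V)) :
    Submodule (∀ j, Rs j) V where
  carrier := Subtype.val '' (S : Set ↥(piComp Rs i V))
  add_mem' := by
    rintro _ _ ⟨a, ha, rfl⟩ ⟨b, hb, rfl⟩
    exact ⟨a + b, S.add_mem ha hb, rfl⟩
  zero_mem' := ⟨0, S.zero_mem, rfl⟩
  smul_mem' := by
    rintro r _ ⟨a, ha, rfl⟩
    refine ⟨r i • a, S.smul_mem _ ha, ?_⟩
    rw [piComp_smul_coe]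
    exact (smul_of_piIdem_fix a.2 r).symm

theorem mem_pemb {i : ι} {S : Submodule (Rs i) ↥(piComp Rs i V)} {v : V} :
    v ∈ pemb Rs i S ↔ ∃ x : ↥(piComp Rs i V), x ∈ S ∧ (x : V) = v := Iff.rfl

theorem coe_mem_pemb {i : ι} {S : Submodule (Rs i) ↥(piComp Rs i V)}
    {x : ↥(piComp Rs i V)} (hx : x ∈ S) : (x : V) ∈ pemb Rs i S := ⟨x, hx, rfl⟩

theorem pemb_fix {i : ι} {S : Submodule (Rs i) ↥(piComp Rs i V)} {v : V}
    (hv : v ∈ pemb Rs i S) : piIdem Rs i • v = v := by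
  obtain ⟨x, _, rfl⟩ := hv
  exact x.2

theorem gc_pemb_scomp (i : ι) :
    GaloisConnection (pemb Rs (V := V) i) (scomp Rs (V := V) i) := by
  intro S N
  constructor
  · intro h x hx
    exact h (coe_mem_pemb hx)
  · rintro h _ ⟨x, hx, rfl⟩
    exact h hx

theorem gc_scomp_pker (i : ι) (N : Submodule (∀ j, Rs j) V)
    (S : Submodule (Rs i) ↥(piComp Rs i V)) :
    scomp Rs i N ≤ S ↔ ∀ v ∈ N, piProj Rs i v ∈ S := by
  constructor
  · intro h v hv
    exact h (piProj_mem_scomp hv)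
  · intro h x hx
    have := h x hx
    rwa [piProj_of_mem] at this

variable (Rs) in
/-- The right adjoint of `scomp`. -/
def pker (i : ι) (S : Submodule (Rs i) ↥(piComp Rs i V)) :
    Submodule (∀ j, Rs j) V where
  carrier := {v | piProj Rs i v ∈ S}
  add_mem' := by
    intro a b ha hb
    simp only [Set.mem_setOf_eq, map_add] at *
    exact S.add_mem ha hb
  zero_mem' := by
    simp only [Set.mem_setOf_eq, map_zero]
    exact S.zero_mem
  smul_mem' := by
    intro r v hv
    simp only [Set.mem_setOf_eq] at *
    rw [piProj_smul]
    exact S.smul_mem _ hv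

theorem gc_scomp_pker' (i : ι) :
    GaloisConnection (scomp Rs (V := V) i) (pker Rs (V := V) i) := by
  intro N S
  rw [gc_scomp_pker]
  constructor
  · intro h v hv; exact h v hv
  · intro h v hv; exact h hv

theorem scomp_iSup {κ : Sort*} (i : ι) (f : κ → Submodule (∀ j, Rs j) V) :
    scomp Rs i (⨆ k, f k) = ⨆ k, scomp Rs i (f k) := (gc_scomp_pker' i).l_iSup

theorem pemb_iSup {κ : Sort*} (i : ι) (f : κ → Submodule (Rs i) ↥(piComp Rs i V)) :
    pemb Rs i (⨆ k, f k) = ⨆ k, pemb Rs i (f k) := (gc_pemb_scomp i).l_iSup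

theorem pemb_scomp_le (i : ι) (N : Submodule (∀ j, Rs j) V) :
    pemb Rs i (scomp Rs i N) ≤ N := (gc_pemb_scomp i).l_u_le N

theorem scomp_pemb (i : ι) (S : Submodule (Rs i) ↥(piComp Rs i V)) :
    scomp Rs i (pemb Rs i S) = S := by
  ext x
  rw [mem_scomp, mem_pemb]
  constructor
  · rintro ⟨y, hy, hval⟩
    rwa [← Subtype.ext hval]
  · intro hx
    exact ⟨x, hx, rfl⟩

theorem pemb_bot {i : ι} : pemb Rs i (⊥ : Submodule (Rs i) ↥(piComp Rs i V)) = ⊥ := by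
  ext v
  rw [mem_pemb, Submodule.mem_bot]
  constructor
  · rintro ⟨x, hx, rfl⟩
    rw [Submodule.mem_bot] at hx
    rw [hx]; rfl
  · rintro rfl
    exact ⟨0, Submodule.zero_mem _, rfl⟩

theorem pemb_inf (i : ι) (S T : Submodule (Rs i) ↥(piComp Rs i V)) :
    pemb Rs i (S ⊓ T) = pemb Rs i S ⊓ pemb Rs i T := by
  ext v
  simp only [Submodule.mem_inf, mem_pemb]
  constructor
  · rintro ⟨x, ⟨h1, h2⟩, rfl⟩
    exact ⟨⟨x, h1, rfl⟩, ⟨x, h2, rfl⟩⟩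
  · rintro ⟨⟨x, hx, rfl⟩, ⟨y, hy, hval⟩⟩
    exact ⟨x, ⟨hx, by rwa [← Subtype.ext hval]⟩, rfl⟩

theorem pemb_ne_bot {i : ι} {S : Submodule (Rs i) ↥(piComp Rs i V)} (h : S ≠ ⊥) :
    pemb Rs i S ≠ ⊥ := by
  intro hb
  apply h
  rw [← scomp_pemb i S, hb, scomp_bot]

theorem pemb_eq_bot_iff {i : ι} {S : Submodule (Rs i) ↥(piComp Rs i V)} :
    pemb Rs i S = ⊥ ↔ S = ⊥ := by
  constructor
  · intro h
    by_contra hc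
    exact pemb_ne_bot hc h
  · rintro rfl; exact pemb_bot

theorem scomp_isCompl {i : ι} {N K : Submodule (∀ j, Rs j) V} (h : IsCompl N K) :
    IsCompl (scomp Rs i N) (scomp Rs i K) := by
  constructor
  · rw [disjoint_iff, ← scomp_inf, disjoint_iff.mp h.1, scomp_bot]
  · rw [codisjoint_iff]
    rw [eq_top_iff]
    intro x _
    have hx : (x : V) ∈ N ⊔ K := by
      rw [codisjoint_iff.mp h.2]; trivial
    obtain ⟨n, hn, k, hk, hnk⟩ := Submodule.mem_sup.mp hx
    rw [Submodule.mem_sup]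
    refine ⟨piProj Rs i n, piProj_mem_scomp hn, piProj Rs i k, piProj_mem_scomp hk, ?_⟩
    rw [← map_add, hnk, piProj_of_mem]

variable (Rs) in
/-- Combination of a family of component submodules. -/
def pcombine (Ks : ∀ i, Submodule (Rs i) ↥(piComp Rs i V)) :
    Submodule (∀ j, Rs j) V where
  carrier := {v | ∀ i, piProj Rs i v ∈ Ks i}
  add_mem' := by
    intro a b ha hb i
    rw [map_add]
    exact (Ks i).add_mem (ha i) (hb i)
  zero_mem' := by
    intro i
    rw [map_zero]
    exact (Ks i).zero_mem
  smul_mem' := by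
    intro r v hv i
    rw [piProj_smul]
    exact (Ks i).smul_mem _ (hv i)

theorem mem_pcombine {Ks : ∀ i, Submodule (Rs i) ↥(piComp Rs i V)} {v : V} :
    v ∈ pcombine Rs Ks ↔ ∀ i, piProj Rs i v ∈ Ks i := Iff.rfl

theorem scomp_pcombine (i : ι) (Ks : ∀ i, Submodule (Rs i) ↥(piComp Rs i V)) :
    scomp Rs i (pcombine Rs Ks) = Ks i := by
  ext x
  rw [mem_scomp, mem_pcombine]
  constructor
  · intro h
    have := h i
    rwa [piProj_of_mem] at this
  · intro hx j
    by_cases hj : j = i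
    · subst hj; rwa [piProj_of_mem]
    · rw [piProj_of_mem_ne hj]
      exact (Ks j).zero_mem

theorem pcombine_scomp (N : Submodule (∀ j, Rs j) V) :
    pcombine Rs (fun i => scomp Rs i N) = N := by
  ext v
  rw [mem_pcombine]
  exact mem_iff_proj.symm

theorem pcombine_isCompl {Ss Ks : ∀ i, Submodule (Rs i) ↥(piComp Rs i V)}
    (h : ∀ i, IsCompl (Ss i) (Ks i)) : IsCompl (pcombine Rs Ss) (pcombine Rs Ks) := by
  constructor
  · rw [disjoint_iff, eq_bot_iff]
    rintro v ⟨hv1, hv2⟩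
    simp only [Submodule.mem_bot]
    have : ∀ i, piProj Rs i v = 0 := by
      intro i
      have := Submodule.mem_inf.mpr ⟨hv1 i, hv2 i⟩
      rwa [disjoint_iff.mp (h i).1, Submodule.mem_bot] at this
    rw [← sum_piProj Rs v]
    refine Finset.sum_eq_zero fun i _ => ?_
    rw [this i]; rfl
  · rw [codisjoint_iff, eq_top_iff]
    intro v _
    have hx : ∀ i, ∃ s ∈ Ss i, ∃ k ∈ Ks i, s + k = piProj Rs i v := by
      intro i
      have : piProj Rs i v ∈ Ss i ⊔ Ks i := by
        rw [codisjoint_iff.mp (h i).2]; trivial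
      exact Submodule.mem_sup.mp this
    choose s hs k hk hsk using hx
    rw [Submodule.mem_sup]
    refine ⟨∑ i, ((s i : ↥(piComp Rs i V)) : V), ?_, ∑ i, ((k i : ↥(piComp Rs i V)) : V), ?_, ?_⟩
    · intro j
      rw [map_sum]
      rw [Finset.sum_eq_single j]
      · rw [piProj_of_mem]; exact hs j
      · intro b _ hb
        rw [piProj_of_mem_ne (Ne.symm hb)]
      · intro hj; exact absurd (Finset.mem_univ j) hj
    · intro j
      rw [map_sum]
      rw [Finset.sum_eq_single j]
      · rw [piProj_of_mem]; exact hk j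
      · intro b _ hb
        rw [piProj_of_mem_ne (Ne.symm hb)]
      · intro hj; exact absurd (Finset.mem_univ j) hj
    · rw [← Finset.sum_add_distrib]
      rw [← sum_piProj Rs v]
      refine Finset.sum_congr rfl fun i _ => ?_
      rw [← hsk i]
      rfl

theorem scomp_summand {i : ι} {N : Submodule (∀ j, Rs j) V}
    (h : IsDirectSummand N) : IsDirectSummand (scomp Rs i N) := by
  obtain ⟨K, hK⟩ := h
  exact ⟨scomp Rs i K, scomp_isCompl hK⟩

theorem summand_of_scomp {N : Submodule (∀ j, Rs j) V}
    (h : ∀ i, IsDirectSummand (scomp Rs i N)) : IsDirectSummand N := by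
  choose K hK using h
  refine ⟨pcombine Rs K, ?_⟩
  have := pcombine_isCompl hK
  rwa [pcombine_scomp] at this

theorem pcombine_summand {Ss : ∀ i, Submodule (Rs i) ↥(piComp Rs i V)}
    (h : ∀ i, IsDirectSummand (Ss i)) : IsDirectSummand (pcombine Rs Ss) := by
  choose K hK using h
  exact ⟨pcombine Rs K, pcombine_isCompl hK⟩

end PiDefs

end PiSection
section PiSection2

namespace CompatEquiv

variable {R M N : Type*} [Ring R] [AddCommGroup M] [AddCommGroup N]
  [Module R M] [Module R N]

/-- A plain linear equivalence gives a compatible equivalence. -/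
def ofLinearEquiv (e : M ≃ₗ[R] N) : CompatEquiv R R M N where
  σ := id
  τ := id
  e := e.toAddEquiv
  hσ := fun r m => map_smul e r m
  hτ := fun r n => map_smul e.symm r n

theorem smap_ofLinearEquiv (e : M ≃ₗ[R] N) (P : Submodule R M) :
    (ofLinearEquiv e).smap P = P.map e.toLinearMap := by
  ext n
  rw [(ofLinearEquiv e).mem_smap, Submodule.mem_map]
  constructor
  · intro h
    exact ⟨_, h, by simp [ofLinearEquiv]⟩
  · rintro ⟨m, hm, rfl⟩
    simpa [ofLinearEquiv] using hm

theorem summand_map_equiv (e : M ≃ₗ[R] N) {P : Submodule R M} :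
    IsDirectSummand P ↔ IsDirectSummand (P.map e.toLinearMap) := by
  rw [← smap_ofLinearEquiv]
  exact (ofLinearEquiv e).summand_iff

theorem map_equiv_mem (e : M ≃ₗ[R] N) (P : Submodule R M) (x : N) :
    x ∈ P.map e.toLinearMap ↔ e.symm x ∈ P := by
  rw [Submodule.mem_map]
  constructor
  · rintro ⟨m, hm, rfl⟩; simpa using hm
  · intro h; exact ⟨e.symm x, h, by simp⟩

theorem isCompl_map_equiv (e : M ≃ₗ[R] N) {P Q : Submodule R M} (h : IsCompl P Q) :
    IsCompl (P.map e.toLinearMap) (Q.map e.toLinearMap) := by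
  rw [← smap_ofLinearEquiv, ← smap_ofLinearEquiv]
  exact (ofLinearEquiv e).smap_isCompl h

end CompatEquiv

variable {ι : Type*} [Fintype ι] [DecidableEq ι]
variable {Rs : ι → Type*} [∀ i, Ring (Rs i)]
variable {V : Type*} [AddCommGroup V] [Module (∀ j, Rs j) V]

theorem piComp_coe_mem {i : ι} {A : Submodule (∀ j, Rs j) V} (x : ↥(piComp Rs i ↥A)) :
    piIdem Rs i • (x.1 : V) = (x.1 : V) := by
  have h := congrArg Subtype.val x.2
  simpa using h

/-- Identification of `piComp i ↥A` with the subtype of the component submodule. -/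
def compSubEquiv (i : ι) (A : Submodule (∀ j, Rs j) V) :
    ↥(piComp Rs i ↥A) ≃ₗ[Rs i] ↥(scomp Rs i A) where
  toFun x := ⟨⟨(x.1 : V), piComp_coe_mem x⟩, x.1.2⟩
  invFun y := ⟨⟨(y.1 : V), y.2⟩, by
    rw [mem_piComp]
    exact Subtype.ext y.1.2⟩
  left_inv x := Subtype.ext (Subtype.ext rfl)
  right_inv y := Subtype.ext (Subtype.ext rfl)
  map_add' x y := Subtype.ext (Subtype.ext rfl)
  map_smul' a x := Subtype.ext (Subtype.ext rfl)

/-- The component of a linear map between subtypes. -/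
def fcomp (i : ι) {A B : Submodule (∀ j, Rs j) V} (f : ↥A →ₗ[∀ j, Rs j] ↥B) :
    ↥(piComp Rs i ↥A) →ₗ[Rs i] ↥(piComp Rs i ↥B) where
  toFun x := ⟨f x.1, by rw [mem_piComp, ← map_smul, x.2]⟩
  map_add' x y := Subtype.ext (by
    show f ((x + y : ↥(piComp Rs i ↥A)).1) = f x.1 + f y.1
    rw [Submodule.coe_add, map_add])
  map_smul' a x := Subtype.ext (by
    show f ((Pi.single i a : ∀ j, Rs j) • x.1) = (Pi.single i a : ∀ j, Rs j) • f x.1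
    rw [map_smul])

@[simp] theorem fcomp_coe (i : ι) {A B : Submodule (∀ j, Rs j) V}
    (f : ↥A →ₗ[∀ j, Rs j] ↥B) (x : ↥(piComp Rs i ↥A)) :
    ((fcomp i f x : ↥(piComp Rs i ↥B)) : ↥B) = f x.1 := rfl

theorem ker_fcomp (i : ι) {A B : Submodule (∀ j, Rs j) V} (f : ↥A →ₗ[∀ j, Rs j] ↥B) :
    LinearMap.ker (fcomp i f) = scomp Rs i (LinearMap.ker f) := by
  ext x
  rw [LinearMap.mem_ker, mem_scomp, LinearMap.mem_ker]
  rw [Subtype.ext_iff, fcomp_coe]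
  rfl

theorem range_fcomp (i : ι) {A B : Submodule (∀ j, Rs j) V} (f : ↥A →ₗ[∀ j, Rs j] ↥B) :
    LinearMap.range (fcomp i f) = scomp Rs i (LinearMap.range f) := by
  ext y
  rw [LinearMap.mem_range, mem_scomp, LinearMap.mem_range]
  constructor
  · rintro ⟨x, rfl⟩
    exact ⟨x.1, rfl⟩
  · rintro ⟨a, ha⟩
    refine ⟨piProj Rs i a, Subtype.ext ?_⟩
    rw [fcomp_coe]
    show f (piIdem Rs i • a) = y.1
    rw [map_smul, ha]
    exact y.2

set_option synthInstance.maxHeartbeats 1000000 in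
set_option maxHeartbeats 1600000 in
theorem piC4 (h : ∀ i, IsC4Module (Rs i) ↥(piComp Rs i V)) :
    IsC4Module (∀ j, Rs j) V := by
  intro A B hAB f hker
  apply summand_of_scomp
  intro i
  set θA := compSubEquiv i A with hθA
  set θB := compSubEquiv i B with hθB
  set g : ↥(scomp Rs i A) →ₗ[Rs i] ↥(scomp Rs i B) :=
    θB.toLinearMap ∘ₗ (fcomp i f) ∘ₗ θA.symm.toLinearMap with hg
  have hkerg : LinearMap.ker g = (LinearMap.ker (fcomp i f)).map θA.toLinearMap := by
    ext x
    rw [LinearMap.mem_ker, Submodule.mem_map]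
    constructor
    · intro hx
      refine ⟨θA.symm x, ?_, by simp⟩
      rw [LinearMap.mem_ker]
      refine θB.map_eq_zero_iff.mp ?_
      exact hx
    · rintro ⟨y, hy, rfl⟩
      show θB (fcomp i f (θA.symm (θA.toLinearMap y))) = 0
      rw [LinearMap.mem_ker] at hy
      rw [LinearEquiv.coe_toLinearMap, LinearEquiv.symm_apply_apply, hy, map_zero]
  have hrangeg : LinearMap.range g = (LinearMap.range (fcomp i f)).map θB.toLinearMap := by
    ext y
    rw [LinearMap.mem_range, Submodule.mem_map]
    constructor
    · rintro ⟨x, rfl⟩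
      exact ⟨fcomp i f (θA.symm x), ⟨θA.symm x, rfl⟩, rfl⟩
    · rintro ⟨z, ⟨x, hx⟩, rfl⟩
      refine ⟨θA x, ?_⟩
      show θB (fcomp i f (θA.symm (θA x))) = θB.toLinearMap z
      rw [LinearEquiv.symm_apply_apply, hx]
      rfl
  obtain ⟨K, hK⟩ := hker
  have hkc : IsCompl (scomp Rs i (LinearMap.ker f)) (scomp Rs i K) := scomp_isCompl hK
  rw [← ker_fcomp i f] at hkc
  have hkc2 := @CompatEquiv.isCompl_map_equiv (Rs i) ↥(piComp Rs i ↥A) ↥(scomp Rs i A)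
    _ _ _ _ _ θA _ _ hkc
  have hr := h i (scomp Rs i A) (scomp Rs i B) (scomp_isCompl hAB) g
    ⟨_, by rw [hkerg]; exact hkc2⟩
  rw [hrangeg] at hr
  have h2 := (@CompatEquiv.summand_map_equiv (Rs i) ↥(piComp Rs i ↥B) ↥(scomp Rs i B)
    _ _ _ _ _ θB _).mpr hr
  rwa [range_fcomp] at h2

end PiSection2
section PiSection3

variable {ι : Type*} [Fintype ι] [DecidableEq ι]
variable {Rs : ι → Type*} [∀ i, Ring (Rs i)]
variable {V : Type*} [AddCommGroup V] [Module (∀ j, Rs j) V]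

theorem pemb_elt_mem {i : ι} {S : Submodule (Rs i) ↥(piComp Rs i V)} {v : V}
    (hv : v ∈ pemb Rs i S) (hfix : piIdem Rs i • v = v) :
    (⟨v, hfix⟩ : ↥(piComp Rs i V)) ∈ S := by
  obtain ⟨x, hx, hval⟩ := hv
  rwa [show x = ⟨v, hfix⟩ from Subtype.ext hval] at hx

/-- The compatible equivalence between a component submodule and its embedding. -/
def pembCompat (i : ι) (S : Submodule (Rs i) ↥(piComp Rs i V)) :
    CompatEquiv (Rs i) (∀ j, Rs j) ↥S ↥(pemb Rs i S) where
  σ := fun a => Pi.single i a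
  τ := fun r => r i
  e := { toFun := fun y => ⟨(y.1 : V), coe_mem_pemb y.2⟩
         invFun := fun w => ⟨⟨w.1, pemb_fix w.2⟩, pemb_elt_mem w.2 (pemb_fix w.2)⟩
         left_inv := fun y => Subtype.ext (Subtype.ext rfl)
         right_inv := fun w => Subtype.ext rfl
         map_add' := fun y z => Subtype.ext rfl }
  hσ := fun a y => Subtype.ext rfl
  hτ := fun r w => Subtype.ext (Subtype.ext (smul_of_piIdem_fix (pemb_fix w.2) r))

theorem piC4Star :
    IsC4StarModule (∀ j, Rs j) V ↔ ∀ i, IsC4StarModule (Rs i) ↥(piComp Rs i V) := by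
  constructor
  · intro h i S
    exact ((pembCompat i S).symm).c4_of (h (pemb Rs i S))
  · intro h N
    apply piC4 (V := ↥N)
    intro i
    exact ((CompatEquiv.ofLinearEquiv (compSubEquiv i N)).symm).c4_of (h i (scomp Rs i N))

variable (Rs) in
/-- The kernel of the action of the `i`-th idempotent. -/
def piZ (i : ι) : Submodule (∀ j, Rs j) V where
  carrier := {v | piIdem Rs i • v = 0}
  add_mem' := by
    intro a b ha hb
    simp only [Set.mem_setOf_eq] at *
    rw [smul_add, ha, hb, add_zero]
  zero_mem' := smul_zero _
  smul_mem' := by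
    intro r v hv
    simp only [Set.mem_setOf_eq] at *
    rw [← smul_piIdem_comm, hv, smul_zero]

theorem pemb_isCompl {i : ι} {X Y : Submodule (Rs i) ↥(piComp Rs i V)}
    (h : IsCompl X Y) :
    IsCompl (pemb Rs i X) (pemb Rs i Y ⊔ piZ Rs i) := by
  constructor
  · rw [disjoint_iff, eq_bot_iff]
    intro v hv
    obtain ⟨hv1, hv2⟩ := Submodule.mem_inf.mp hv
    obtain ⟨w, hw, z, hz, hwz⟩ := Submodule.mem_sup.mp hv2
    have hzv : piIdem Rs i • z = 0 := hz
    have hfix : piIdem Rs i • v = v := pemb_fix hv1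
    have hwfix : piIdem Rs i • w = w := pemb_fix hw
    have hvw : v = w := by rw [← hfix, ← hwz, smul_add, hwfix, hzv, add_zero]
    have hmem : v ∈ pemb Rs i X ⊓ pemb Rs i Y :=
      Submodule.mem_inf.mpr ⟨hv1, hvw ▸ hw⟩
    rwa [← pemb_inf, disjoint_iff.mp h.1, pemb_bot] at hmem
  · rw [codisjoint_iff, eq_top_iff]
    intro v _
    have hx : piProj Rs i v ∈ X ⊔ Y := by rw [codisjoint_iff.mp h.2]; trivial
    obtain ⟨a, ha, b, hb, hab⟩ := Submodule.mem_sup.mp hx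
    rw [Submodule.mem_sup]
    refine ⟨(a : V), coe_mem_pemb ha, (b : V) + (v - piIdem Rs i • v), ?_, ?_⟩
    · refine Submodule.mem_sup.mpr ⟨(b : V), coe_mem_pemb hb, v - piIdem Rs i • v, ?_, rfl⟩
      show piIdem Rs i • (v - piIdem Rs i • v) = 0
      rw [smul_sub, piIdem_smul_smul, sub_self]
    · have hab' : (a : V) + (b : V) = piIdem Rs i • v := by
        have := congrArg Subtype.val hab
        simpa using this
      rw [← add_assoc, hab']
      abel

theorem pemb_mono {i : ι} {S T : Submodule (Rs i) ↥(piComp Rs i V)} (h : S ≤ T) :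
    pemb Rs i S ≤ pemb Rs i T := (gc_pemb_scomp i).monotone_l h

/-- Lift of a linear equivalence between component submodules to their embeddings. -/
def upEquiv (i : ι) {A B : Submodule (Rs i) ↥(piComp Rs i V)} (f' : ↥A ≃ₗ[Rs i] ↥B) :
    ↥(pemb Rs i A) ≃ₗ[∀ j, Rs j] ↥(pemb Rs i B) where
  toFun w := (pembCompat i B).e (f' ((pembCompat i A).e.symm w))
  invFun w := (pembCompat i A).e (f'.symm ((pembCompat i B).e.symm w))
  left_inv := fun w => by simp
  right_inv := fun w => by simp
  map_add' := fun x y => by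
    show (pembCompat i B).e (f' ((pembCompat i A).e.symm (x + y)))
      = (pembCompat i B).e (f' ((pembCompat i A).e.symm x))
        + (pembCompat i B).e (f' ((pembCompat i A).e.symm y))
    rw [map_add, map_add, map_add]
  map_smul' := fun r w => by
    show (pembCompat i B).e (f' ((pembCompat i A).e.symm (r • w))) = r • _
    rw [(pembCompat i A).hτ, map_smul, (pembCompat i B).hσ]
    refine Subtype.ext ?_
    exact (smul_of_piIdem_fix
      (pemb_fix ((pembCompat i B).e (f' ((pembCompat i A).e.symm w))).2) r).symm

@[simp] theorem upEquiv_coe (i : ι) {A B : Submodule (Rs i) ↥(piComp Rs i V)}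
    (f' : ↥A ≃ₗ[Rs i] ↥B) (w : ↥(pemb Rs i A)) :
    (upEquiv i f' w : V) = ((f' ((pembCompat i A).e.symm w) : ↥(piComp Rs i V)) : V) := rfl

theorem ess_down {i : ι} {X : Submodule (Rs i) ↥(piComp Rs i V)}
    {A : Submodule (∀ j, Rs j) V} (h : IsEssentialIn (pemb Rs i X) A) :
    IsEssentialIn X (scomp Rs i A) := by
  refine ⟨fun x hx => h.1 (coe_mem_pemb hx), ?_⟩
  intro N hN hNb
  have h1 : pemb Rs i N ≤ A := le_trans (pemb_mono hN) (pemb_scomp_le i A)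
  have h2 := h.2 (pemb Rs i N) h1 (pemb_ne_bot hNb)
  rw [← pemb_inf] at h2
  intro hc
  apply h2
  rw [hc, pemb_bot]

theorem ess_combine {X : Submodule (∀ j, Rs j) V}
    {S : ∀ i, Submodule (Rs i) ↥(piComp Rs i V)}
    (h : ∀ i, IsEssentialIn (scomp Rs i X) (S i)) :
    IsEssentialIn X (pcombine Rs S) := by
  refine ⟨fun v hv i => (h i).1 (piProj_mem_scomp hv), ?_⟩
  intro N hN hNb
  obtain ⟨i, hi⟩ := exists_scomp_ne_bot hNb
  have hle : scomp Rs i N ≤ S i := by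
    intro x hx
    have := hN hx
    have h2 := this i
    rwa [piProj_of_mem] at h2
  have h3 := (h i).2 (scomp Rs i N) hle hi
  rw [← scomp_inf] at h3
  exact fun hc => h3 (by rw [hc, scomp_bot])

theorem semisimple_scomp {X : Submodule (∀ j, Rs j) V}
    (hX : IsSemisimpleModule (∀ j, Rs j) ↥X) (i : ι) :
    IsSemisimpleModule (Rs i) ↥(scomp Rs i X) := by
  letI := hX
  have hle : pemb Rs i (scomp Rs i X) ≤ X := pemb_scomp_le i X
  have h2 : IsSemisimpleModule (∀ j, Rs j) ↥(pemb Rs i (scomp Rs i X)) :=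
    IsSemisimpleModule.congr
      (M := ↥(Submodule.comap X.subtype (pemb Rs i (scomp Rs i X))))
      (Submodule.comapSubtypeEquivOfLe hle).symm
  exact ((pembCompat i (scomp Rs i X)).symm).semisimple_of h2

/-- The equivalence on components induced by a linear equivalence of subtypes. -/
def fequiv (i : ι) {X Y : Submodule (∀ j, Rs j) V} (f : ↥X ≃ₗ[∀ j, Rs j] ↥Y) :
    ↥(piComp Rs i ↥X) ≃ₗ[Rs i] ↥(piComp Rs i ↥Y) :=
  LinearEquiv.ofLinear (fcomp i f.toLinearMap) (fcomp i f.symm.toLinearMap)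
    (LinearMap.ext fun x => Subtype.ext (by
      simp only [LinearMap.comp_apply, fcomp_coe, LinearEquiv.coe_toLinearMap,
        LinearEquiv.apply_symm_apply, LinearMap.id_apply]))
    (LinearMap.ext fun x => Subtype.ext (by
      simp only [LinearMap.comp_apply, fcomp_coe, LinearEquiv.coe_toLinearMap,
        LinearEquiv.symm_apply_apply, LinearMap.id_apply]))

/-- The component of a linear equivalence between subtypes. -/
def downEquiv (i : ι) {X Y : Submodule (∀ j, Rs j) V} (f : ↥X ≃ₗ[∀ j, Rs j] ↥Y) :
    ↥(scomp Rs i X) ≃ₗ[Rs i] ↥(scomp Rs i Y) :=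
  (compSubEquiv i X).symm ≪≫ₗ fequiv i f ≪≫ₗ compSubEquiv i Y

theorem downEquiv_coe (i : ι) {X Y : Submodule (∀ j, Rs j) V}
    (f : ↥X ≃ₗ[∀ j, Rs j] ↥Y) (x : ↥(scomp Rs i X)) :
    ((downEquiv i f x : ↥(piComp Rs i V)) : V)
      = ((f ⟨((x : ↥(piComp Rs i V)) : V), x.2⟩ : ↥Y) : V) := rfl

/-- The component of an SW-triple. -/
def downTriple (i : ι) (t : SWTriple (∀ j, Rs j) V) : SWTriple (Rs i) ↥(piComp Rs i V) where
  X := scomp Rs i t.X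
  Y := scomp Rs i t.Y
  semisimpleX := semisimple_scomp t.semisimpleX i
  semisimpleY := semisimple_scomp t.semisimpleY i
  summandX := scomp_summand t.summandX
  summandY := scomp_summand t.summandY
  disj := by rw [← scomp_inf, t.disj, scomp_bot]
  f := downEquiv i t.f

@[simp] theorem downTriple_X (i : ι) (t : SWTriple (∀ j, Rs j) V) :
    (downTriple i t).X = scomp Rs i t.X := rfl

@[simp] theorem downTriple_Y (i : ι) (t : SWTriple (∀ j, Rs j) V) :
    (downTriple i t).Y = scomp Rs i t.Y := rfl

theorem downTriple_extends {i : ι} {t s : SWTriple (∀ j, Rs j) V} (h : t.Extends s) :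
    (downTriple i t).Extends (downTriple i s) := by
  obtain ⟨hX, hY, hf⟩ := h
  refine ⟨scomp_mono hX, scomp_mono hY, ?_⟩
  intro x
  refine Subtype.ext ?_
  show ((downEquiv i s.f ⟨x.1, scomp_mono hX x.2⟩ : ↥(piComp Rs i V)) : V)
    = ((downEquiv i t.f x : ↥(piComp Rs i V)) : V)
  change ((s.f ⟨((x : ↥(piComp Rs i V)) : V), hX x.2⟩ : ↥s.Y) : V)
    = ((t.f ⟨((x : ↥(piComp Rs i V)) : V), x.2⟩ : ↥t.Y) : V)
  exact hf ⟨((x : ↥(piComp Rs i V)) : V), x.2⟩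

/-- The embedding of an SW-triple of a component. -/
def upTriple (i : ι) (t' : SWTriple (Rs i) ↥(piComp Rs i V)) : SWTriple (∀ j, Rs j) V where
  X := pemb Rs i t'.X
  Y := pemb Rs i t'.Y
  semisimpleX := (pembCompat i t'.X).semisimple_of t'.semisimpleX
  semisimpleY := (pembCompat i t'.Y).semisimple_of t'.semisimpleY
  summandX := by
    obtain ⟨K, hK⟩ := t'.summandX
    exact ⟨pemb Rs i K ⊔ piZ Rs i, pemb_isCompl hK⟩
  summandY := by
    obtain ⟨K, hK⟩ := t'.summandY
    exact ⟨pemb Rs i K ⊔ piZ Rs i, pemb_isCompl hK⟩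
  disj := by rw [← pemb_inf, t'.disj, pemb_bot]
  f := upEquiv i t'.f

@[simp] theorem upTriple_X (i : ι) (t' : SWTriple (Rs i) ↥(piComp Rs i V)) :
    (upTriple i t').X = pemb Rs i t'.X := rfl

@[simp] theorem upTriple_Y (i : ι) (t' : SWTriple (Rs i) ↥(piComp Rs i V)) :
    (upTriple i t').Y = pemb Rs i t'.Y := rfl

theorem upTriple_extends {i : ι} {t' s' : SWTriple (Rs i) ↥(piComp Rs i V)}
    (h : t'.Extends s') : (upTriple i t').Extends (upTriple i s') := by
  obtain ⟨hX, hY, hf⟩ := h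
  refine ⟨pemb_mono hX, pemb_mono hY, ?_⟩
  intro x
  show (upEquiv i s'.f ⟨x.1, pemb_mono hX x.2⟩ : V) = (upEquiv i t'.f x : V)
  change ((s'.f ((pembCompat i s'.X).e.symm ⟨x.1, pemb_mono hX x.2⟩) : ↥(piComp Rs i V)) : V)
    = ((t'.f ((pembCompat i t'.X).e.symm x) : ↥(piComp Rs i V)) : V)
  have e1 : (pembCompat i s'.X).e.symm ⟨x.1, pemb_mono hX x.2⟩
      = ⟨((pembCompat i t'.X).e.symm x).1, hX ((pembCompat i t'.X).e.symm x).2⟩ :=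
    Subtype.ext (Subtype.ext rfl)
  rw [e1]
  exact congrArg Subtype.val (hf ((pembCompat i t'.X).e.symm x))

theorem piSW_forward (h : IsSemiWeakCS (∀ j, Rs j) V) (i : ι) :
    IsSemiWeakCS (Rs i) ↥(piComp Rs i V) := by
  intro C' hC'
  have hchain : IsChain SWTriple.Extends (upTriple i '' C') := by
    rintro _ ⟨t1, ht1, rfl⟩ _ ⟨t2, ht2, rfl⟩ hne
    have hne' : t1 ≠ t2 := by rintro rfl; exact hne rfl
    rcases hC' ht1 ht2 hne' with h1 | h1
    · exact Or.inl (upTriple_extends h1)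
    · exact Or.inr (upTriple_extends h1)
  obtain ⟨A, B, hA, hB, hXA, hYB⟩ := h (upTriple i '' C') hchain
  have hsX : (⨆ t ∈ upTriple i '' C', t.X) = pemb Rs i (⨆ t' ∈ C', t'.X) := by
    rw [iSup_image]
    simp only [upTriple_X]
    rw [pemb_iSup]
    exact iSup_congr fun t' => (pemb_iSup i _).symm
  have hsY : (⨆ t ∈ upTriple i '' C', t.Y) = pemb Rs i (⨆ t' ∈ C', t'.Y) := by
    rw [iSup_image]
    simp only [upTriple_Y]
    rw [pemb_iSup]
    exact iSup_congr fun t' => (pemb_iSup i _).symm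
  rw [hsX] at hXA
  rw [hsY] at hYB
  exact ⟨scomp Rs i A, scomp Rs i B, scomp_summand hA, scomp_summand hB,
    ess_down hXA, ess_down hYB⟩

theorem piSW_back (h : ∀ i, IsSemiWeakCS (Rs i) ↥(piComp Rs i V)) :
    IsSemiWeakCS (∀ j, Rs j) V := by
  intro C hC
  have hchain : ∀ i, IsChain SWTriple.Extends (downTriple i '' C) := by
    intro i
    rintro _ ⟨t1, ht1, rfl⟩ _ ⟨t2, ht2, rfl⟩ hne
    have hne' : t1 ≠ t2 := by rintro rfl; exact hne rfl
    rcases hC ht1 ht2 hne' with h1 | h1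
    · exact Or.inl (downTriple_extends h1)
    · exact Or.inr (downTriple_extends h1)
  have hex := fun i => h i (downTriple i '' C) (hchain i)
  choose A B hA hB hXA hYB using hex
  have hsX : ∀ i, (⨆ t ∈ downTriple i '' C, t.X) = scomp Rs i (⨆ t ∈ C, t.X) := by
    intro i
    rw [iSup_image]
    simp only [downTriple_X]
    rw [scomp_iSup]
    exact iSup_congr fun t => (scomp_iSup i _).symm
  have hsY : ∀ i, (⨆ t ∈ downTriple i '' C, t.Y) = scomp Rs i (⨆ t ∈ C, t.Y) := by
    intro i
    rw [iSup_image]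
    simp only [downTriple_Y]
    rw [scomp_iSup]
    exact iSup_congr fun t => (scomp_iSup i _).symm
  refine ⟨pcombine Rs A, pcombine Rs B, pcombine_summand hA, pcombine_summand hB, ?_, ?_⟩
  · refine ess_combine fun i => ?_
    have := hXA i
    rwa [hsX i] at this
  · refine ess_combine fun i => ?_
    have := hYB i
    rwa [hsY i] at this

theorem piStrongly :
    IsStronglyC4StarModule (∀ j, Rs j) V
      ↔ ∀ i, IsStronglyC4StarModule (Rs i) ↥(piComp Rs i V) := by
  constructor
  · intro h i
    exact ⟨piSW_forward h.1 i, piC4Star.mp h.2 i⟩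
  · intro h
    exact ⟨piSW_back fun i => (h i).1, piC4Star.mpr fun i => (h i).2⟩

end PiSection3
section Glue

variable {ι : Type*} [Fintype ι] [DecidableEq ι]
variable {Rs : ι → Type*} [∀ i, Ring (Rs i)]

/-- Evaluation compatible equivalence between the `i`-th component of a product module and
the `i`-th factor. -/
def evalCompat (Ms : ι → Type*) [∀ j, AddCommGroup (Ms j)] [∀ j, Module (Rs j) (Ms j)]
    (i : ι) :
    CompatEquiv (Rs i) (Rs i) ↥(piComp Rs i (∀ j, Ms j)) (Ms i) where
  σ := id
  τ := id
  e := { toFun := fun x => x.1 i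
         invFun := fun a => ⟨Pi.single i a, by
           rw [mem_piComp]
           funext j
           show piIdem Rs i j • Pi.single i a j = Pi.single i a j
           by_cases hj : j = i
           · subst hj
             rw [show piIdem Rs j j = 1 from Pi.single_eq_same j 1, one_smul]
           · rw [Pi.single_eq_of_ne hj, smul_zero]⟩
         left_inv := fun x => by
           refine Subtype.ext ?_
           show (Pi.single i (x.1 i) : ∀ j, Ms j) = x.1
           funext j
           by_cases hj : j = i
           · subst hj; exact Pi.single_eq_same j _
           · rw [Pi.single_eq_of_ne hj]
             have h2 : piIdem Rs i j • x.1 j = x.1 j := congrFun x.2 j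
             rw [← h2, show piIdem Rs i j = 0 from Pi.single_eq_of_ne hj 1, zero_smul]
         right_inv := fun a => Pi.single_eq_same i a
         map_add' := fun x y => rfl }
  hσ := fun a x => by
    show (Pi.single i a : ∀ j, Rs j) i • x.1 i = a • x.1 i
    rw [Pi.single_eq_same]
  hτ := fun a w => by
    refine Subtype.ext ?_
    show (Pi.single i (a • w) : ∀ j, Ms j)
      = (Pi.single i a : ∀ j, Rs j) • (Pi.single i w : ∀ j, Ms j)
    funext j
    show Pi.single i (a • w) j
      = (Pi.single i a : ∀ j, Rs j) j • (Pi.single i w : ∀ j, Ms j) j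
    by_cases hj : j = i
    · subst hj
      rw [Pi.single_eq_same, Pi.single_eq_same, Pi.single_eq_same]
    · rw [Pi.single_eq_of_ne hj, Pi.single_eq_of_ne hj, Pi.single_eq_of_ne hj, smul_zero]

theorem piStronglyRing (Ms : ι → Type*) [∀ j, AddCommGroup (Ms j)]
    [∀ j, Module (Rs j) (Ms j)] :
    IsStronglyC4StarModule (∀ j, Rs j) (∀ j, Ms j)
      ↔ ∀ i, IsStronglyC4StarModule (Rs i) (Ms i) := by
  rw [piStrongly]
  exact forall_congr' fun i => (evalCompat Ms i).strongly_iff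

/-- The compatible equivalence between the right regular module of a product and the
product of the right regular modules. -/
def prodOpCompat : CompatEquiv ((∀ i, Rs i)ᵐᵒᵖ) (∀ i, (Rs i)ᵐᵒᵖ) (∀ i, Rs i) (∀ i, Rs i) where
  σ := fun o i => MulOpposite.op ((MulOpposite.unop o) i)
  τ := fun f => MulOpposite.op (fun i => MulOpposite.unop (f i))
  e := AddEquiv.refl _
  hσ := fun r m => rfl
  hτ := fun s n => rfl

end Glue

/-- A finite direct product of rings is a strongly right (resp. left)
`C4*`-ring if and only if each factor is. -/
theorem finite_product_permanence (m : ℕ) (Rs : Fin m → Type*) [∀ i, Ring (Rs i)] :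
    (IsStronglyRightC4StarRing (∀ i, Rs i) ↔ ∀ i, IsStronglyRightC4StarRing (Rs i)) ∧
    (IsStronglyLeftC4StarRing (∀ i, Rs i) ↔ ∀ i, IsStronglyLeftC4StarRing (Rs i)) := by
  constructor
  · show IsStronglyC4StarModule (∀ i, Rs i)ᵐᵒᵖ (∀ i, Rs i)
      ↔ ∀ i, IsStronglyC4StarModule (Rs i)ᵐᵒᵖ (Rs i)
    rw [(prodOpCompat (Rs := Rs)).strongly_iff]
    exact piStronglyRing (Rs := fun i => (Rs i)ᵐᵒᵖ) Rs
  · show IsStronglyC4StarModule (∀ i, Rs i) (∀ i, Rs i)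
      ↔ ∀ i, IsStronglyC4StarModule (Rs i) (Rs i)
    exact piStronglyRing (Rs := Rs) Rs
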